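/- Let q ≥ 2, k = 2, and F = {f_≠} where f_≠ : [q]² → {0,1} is given by f_≠(x,y) = 1 iff x ≠ y (the Max-q-Coloring predicate). Let D^Y be the uniform distribution on {(f_≠, (σ,τ)) : σ,τ ∈ [q], σ ≠ τ} and D^N the uniform distribution on {f_≠} × [q]². Then D^Y ∈ S_1^Y(F), D^N ∈ S_{1−1/q}^N(F), and μ(D^Y) = μ(D^N). -/

import Mathlib

open scoped Classical

/-- `D` is a probability distribution on the finite type `Ω`. -/
def IsDist {Ω : Type*} [Fintype Ω] (D : Ω → ℝ) : Prop :=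
  (∀ x, 0 ≤ D x) ∧ ∑ x, D x = 1

/-- The value `C(f,a)(b)` of the constraint `(f,a)` on the assignment
`b = (b_{i,σ})` to the `k × q` variables (alphabet `A`). -/
def cVal {A : Type*} {k : ℕ} (f : (Fin k → A) → Bool) (a : Fin k → A)
    (b : Fin k → A → A) : ℝ :=
  if f (fun i => b i (a i)) then 1 else 0

/-- The planted assignment `𝕀` with `𝕀_{i,σ} = σ`. -/
def planted (A : Type*) (k : ℕ) : Fin k → A → A := fun _ σ => σ

/-- The set `S_γ^Y(F)` of YES distributions. -/
noncomputable def SY {A : Type*} [Fintype A] {k : ℕ}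
    (F : Finset ((Fin k → A) → Bool)) (γ : ℝ) :
    Set ((↥F × (Fin k → A)) → ℝ) :=
  {D | IsDist D ∧
    γ ≤ ∑ p : ↥F × (Fin k → A), D p * cVal (p.1 : (Fin k → A) → Bool) p.2 (planted A k)}

/-- The set `S_β^N(F)` of NO distributions. -/
noncomputable def SN {A : Type*} [Fintype A] {k : ℕ}
    (F : Finset ((Fin k → A) → Bool)) (β : ℝ) :
    Set ((↥F × (Fin k → A)) → ℝ) :=
  {D | IsDist D ∧ ∀ P : A → A → ℝ, (∀ σ, IsDist (P σ)) →
    (∑ p : ↥F × (Fin k → A), D p *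
      ∑ b : Fin k → A → A,
        (∏ i, ∏ σ, P σ (b i σ)) * cVal (p.1 : (Fin k → A) → Bool) p.2 b) ≤ β}

/-- The marginal vector `μ(D)` of a distribution `D` on `F × A^k`. -/
noncomputable def marginal {A : Type*} [Fintype A] {k : ℕ}
    (F : Finset ((Fin k → A) → Bool)) (D : ↥F × (Fin k → A) → ℝ) :
    ↥F × Fin k × A → ℝ :=
  fun x => ∑ a : Fin k → A, if a x.2.1 = x.2.2 then D (x.1, a) else 0

/-- The Max-q-Coloring constraint `f_≠(x,y) = 1` iff `x ≠ y`. -/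
def fNe (q : ℕ) : (Fin 2 → Fin q) → Bool :=
  fun a => decide (a 0 ≠ a 1)

/-- The YES distribution for Max-q-Coloring: uniform on `{(f_≠,(σ,τ)) : σ ≠ τ}`. -/
noncomputable def colDY (q : ℕ) :
    ↥({fNe q} : Finset ((Fin 2 → Fin q) → Bool)) × (Fin 2 → Fin q) → ℝ :=
  fun p => if p.2 0 ≠ p.2 1 then ((q : ℝ) * ((q : ℝ) - 1))⁻¹ else 0

/-- The NO distribution for Max-q-Coloring: uniform on `{f_≠} × [q]²`. -/
noncomputable def colDN (q : ℕ) :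
    ↥({fNe q} : Finset ((Fin 2 → Fin q) → Bool)) × (Fin 2 → Fin q) → ℝ :=
  fun _ => ((q : ℝ) ^ 2)⁻¹




section Aux

/-- Sum over `Fin 2 → X` as a double sum. -/
lemma sum_fun_two {X : Type*} [Fintype X] (F : (Fin 2 → X) → ℝ) :
    ∑ b : Fin 2 → X, F b = ∑ u : X, ∑ v : X, F ![u, v] := by
  rw [← Equiv.sum_comp (piFinTwoEquiv (fun _ : Fin 2 => X)).symm, Fintype.sum_prod_type]
  refine Finset.sum_congr rfl fun u _ => Finset.sum_congr rfl fun v _ => ?_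
  congr 1

lemma sum_ite_ne_left {q : ℕ} (u : Fin q) (c : ℝ) :
    ∑ v : Fin q, (if u ≠ v then c else 0) = ((q : ℝ) - 1) * c := by
  have h : ∀ v : Fin q, (if u ≠ v then c else 0) = c - (if u = v then c else 0) := by
    intro v; by_cases h : u = v <;> simp [h]
  simp_rw [h]
  rw [Finset.sum_sub_distrib, Finset.sum_const, Finset.sum_ite_eq, Finset.card_univ,
    Fintype.card_fin, if_pos (Finset.mem_univ u)]
  simp [nsmul_eq_mul]; ring

lemma sum_ite_ne_right {q : ℕ} (u : Fin q) (c : ℝ) :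
    ∑ v : Fin q, (if v ≠ u then c else 0) = ((q : ℝ) - 1) * c := by
  rw [← sum_ite_ne_left u c]
  exact Finset.sum_congr rfl fun v _ => if_congr ne_comm rfl rfl

/-- One-variable factorization. -/
lemma key1 {q : ℕ} (P : Fin q → Fin q → ℝ) (hP : ∀ σ, ∑ x, P σ x = 1)
    (t : Fin q) (h : Fin q → ℝ) :
    ∑ u : Fin q → Fin q, (∏ σ, P σ (u σ)) * h (u t) = ∑ c, P t c * h c := by
  have step1 : ∀ u : Fin q → Fin q,
      (∏ σ, P σ (u σ)) * h (u t) = ∏ σ, (P σ (u σ) * if t = σ then h (u σ) else 1) := by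
    intro u
    rw [Finset.prod_mul_distrib, Finset.prod_ite_eq, if_pos (Finset.mem_univ t)]
  simp_rw [step1]
  have step2 : ∑ u : Fin q → Fin q, ∏ σ, (P σ (u σ) * if t = σ then h (u σ) else 1)
      = ∏ σ, ∑ x, (P σ x * if t = σ then h x else 1) := by
    rw [Finset.prod_univ_sum, Fintype.piFinset_univ]
  rw [step2]
  have step3 : ∀ σ : Fin q, (∑ x, (P σ x * if t = σ then h x else 1))
      = if t = σ then ∑ c, P t c * h c else 1 := by
    intro σ
    by_cases hσ : t = σ
    · subst hσ; simp
    · simp [hσ, hP σ]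
  simp_rw [step3]
  rw [Finset.prod_ite_eq, if_pos (Finset.mem_univ t)]

/-- Two-variable factorization. -/
lemma key2 {q : ℕ} (P : Fin q → Fin q → ℝ) (hP : ∀ σ, ∑ x, P σ x = 1)
    (t₀ t₁ : Fin q) (g : Fin q → Fin q → ℝ) :
    ∑ b : Fin 2 → Fin q → Fin q, (∏ i, ∏ σ, P σ (b i σ)) * g (b 0 t₀) (b 1 t₁)
      = ∑ c, ∑ d, P t₀ c * (P t₁ d * g c d) := by
  rw [sum_fun_two (X := Fin q → Fin q) (fun b => (∏ i, ∏ σ, P σ (b i σ)) * g (b 0 t₀) (b 1 t₁))]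
  have h1 : ∀ u v : Fin q → Fin q,
      (∏ i, ∏ σ, P σ (![u, v] i σ)) * g (![u, v] 0 t₀) (![u, v] 1 t₁)
        = (∏ σ, P σ (u σ)) * ((∏ σ, P σ (v σ)) * g (u t₀) (v t₁)) := by
    intro u v
    rw [Fin.prod_univ_two]
    simp [mul_assoc]
  simp_rw [h1]
  have h2 : ∀ u : Fin q → Fin q,
      ∑ v : Fin q → Fin q, (∏ σ, P σ (v σ)) * g (u t₀) (v t₁)
        = ∑ d, P t₁ d * g (u t₀) d := fun u => key1 P hP t₁ (fun d => g (u t₀) d)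
  calc ∑ u : Fin q → Fin q, ∑ v : Fin q → Fin q,
        (∏ σ, P σ (u σ)) * ((∏ σ, P σ (v σ)) * g (u t₀) (v t₁))
      = ∑ u : Fin q → Fin q, (∏ σ, P σ (u σ)) *
          (∑ v : Fin q → Fin q, (∏ σ, P σ (v σ)) * g (u t₀) (v t₁)) := by
        refine Finset.sum_congr rfl fun u _ => ?_
        rw [Finset.mul_sum]
    _ = ∑ u : Fin q → Fin q, (∏ σ, P σ (u σ)) * (∑ d, P t₁ d * g (u t₀) d) := by
        simp_rw [h2]
    _ = ∑ c, P t₀ c * ∑ d, P t₁ d * g c d :=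
        key1 P hP t₀ (fun c => ∑ d, P t₁ d * g c d)
    _ = ∑ c, ∑ d, P t₀ c * (P t₁ d * g c d) := by
        refine Finset.sum_congr rfl fun c _ => ?_
        rw [Finset.mul_sum]

end Aux

lemma sum_pick {q : ℕ} (σ : Fin q) (H : Fin q → ℝ) :
    ∑ u : Fin q, (if u = σ then H u else 0) = H σ := by
  rw [Finset.sum_ite_eq', if_pos (Finset.mem_univ σ)]

lemma sum2_pick_left {q : ℕ} (σ : Fin q) (G : Fin q → Fin q → ℝ) :
    ∑ u : Fin q, ∑ v : Fin q, (if u = σ then G u v else 0) = ∑ v, G σ v := by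
  have h : ∀ u, ∑ v : Fin q, (if u = σ then G u v else 0)
      = if u = σ then ∑ v, G u v else 0 := by
    intro u; split <;> simp
  simp_rw [h]
  exact sum_pick σ _

lemma sum2_pick_right {q : ℕ} (σ : Fin q) (G : Fin q → Fin q → ℝ) :
    ∑ u : Fin q, ∑ v : Fin q, (if v = σ then G u v else 0) = ∑ u, G u σ :=
  Finset.sum_congr rfl fun u _ => sum_pick σ (G u)


set_option maxHeartbeats 1000000 in
lemma colPart1 (q : ℕ) (hq : 2 ≤ q) :
    colDY q ∈ SY ({fNe q} : Finset ((Fin 2 → Fin q) → Bool)) 1 := by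
  have hq2 : (2 : ℝ) ≤ (q : ℝ) := by exact_mod_cast hq
  have hq0 : (0 : ℝ) < (q : ℝ) := by linarith
  have hq1 : (0 : ℝ) < (q : ℝ) - 1 := by linarith
  have hqne : (q : ℝ) ≠ 0 := ne_of_gt hq0
  have hq1ne : (q : ℝ) - 1 ≠ 0 := ne_of_gt hq1
  have hf0 : fNe q ∈ ({fNe q} : Finset ((Fin 2 → Fin q) → Bool)) :=
    Finset.mem_singleton_self _
  have hsub : ∀ g : ↥({fNe q} : Finset ((Fin 2 → Fin q) → Bool)) → ℝ,
      ∑ x : ↥({fNe q} : Finset ((Fin 2 → Fin q) → Bool)), g x = g ⟨fNe q, hf0⟩ := by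
    intro g
    have h1 : ∀ x : ↥({fNe q} : Finset ((Fin 2 → Fin q) → Bool)), g x = g ⟨fNe q, hf0⟩ :=
      fun x => by congr 1; exact Subtype.ext (Finset.mem_singleton.mp x.2)
    rw [Finset.sum_congr rfl fun x _ => h1 x, Finset.sum_const, Finset.card_univ,
      Fintype.card_coe, Finset.card_singleton, one_smul]
  have hsumY : ∑ p : ↥({fNe q} : Finset ((Fin 2 → Fin q) → Bool)) × (Fin 2 → Fin q),
      colDY q p = 1 := by
    rw [Fintype.sum_prod_type, hsub]
    rw [sum_fun_two (X := Fin q) (fun a => colDY q (⟨fNe q, hf0⟩, a))]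
    have h1 : ∀ u v : Fin q, colDY q (⟨fNe q, hf0⟩, ![u, v])
        = if u ≠ v then ((q : ℝ) * ((q : ℝ) - 1))⁻¹ else 0 := by
      intro u v; simp [colDY]
    simp_rw [h1, sum_ite_ne_left]
    rw [Finset.sum_const, Finset.card_univ, Fintype.card_fin, nsmul_eq_mul]
    field_simp
  have hnonnegY : ∀ p, 0 ≤ colDY q p := by
    intro p
    dsimp [colDY]
    split
    · exact inv_nonneg.mpr (le_of_lt (mul_pos hq0 hq1))
    · exact le_refl 0
  refine ⟨⟨hnonnegY, hsumY⟩, ?_⟩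
  have h : ∑ p : ↥({fNe q} : Finset ((Fin 2 → Fin q) → Bool)) × (Fin 2 → Fin q),
      colDY q p * cVal (p.1 : (Fin 2 → Fin q) → Bool) p.2 (planted (Fin q) 2)
      = ∑ p : ↥({fNe q} : Finset ((Fin 2 → Fin q) → Bool)) × (Fin 2 → Fin q),
        colDY q p := by
    refine Finset.sum_congr rfl fun p _ => ?_
    have hcoe : (p.1 : (Fin 2 → Fin q) → Bool) = fNe q :=
      Finset.mem_singleton.mp p.1.2
    by_cases h : p.2 0 = p.2 1
    · simp [colDY, h]
    · simp [colDY, cVal, planted, hcoe, fNe, h]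
  rw [h, hsumY]

set_option maxHeartbeats 1000000 in
lemma colPart2 (q : ℕ) (hq : 2 ≤ q) :
    colDN q ∈ SN ({fNe q} : Finset ((Fin 2 → Fin q) → Bool)) (1 - (q : ℝ)⁻¹) := by
  have hq2 : (2 : ℝ) ≤ (q : ℝ) := by exact_mod_cast hq
  have hq0 : (0 : ℝ) < (q : ℝ) := by linarith
  have hq1 : (0 : ℝ) < (q : ℝ) - 1 := by linarith
  have hqne : (q : ℝ) ≠ 0 := ne_of_gt hq0
  have hf0 : fNe q ∈ ({fNe q} : Finset ((Fin 2 → Fin q) → Bool)) :=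
    Finset.mem_singleton_self _
  have hsub : ∀ g : ↥({fNe q} : Finset ((Fin 2 → Fin q) → Bool)) → ℝ,
      ∑ x : ↥({fNe q} : Finset ((Fin 2 → Fin q) → Bool)), g x = g ⟨fNe q, hf0⟩ := by
    intro g
    have h1 : ∀ x : ↥({fNe q} : Finset ((Fin 2 → Fin q) → Bool)), g x = g ⟨fNe q, hf0⟩ :=
      fun x => by congr 1; exact Subtype.ext (Finset.mem_singleton.mp x.2)
    rw [Finset.sum_congr rfl fun x _ => h1 x, Finset.sum_const, Finset.card_univ,
      Fintype.card_coe, Finset.card_singleton, one_smul]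
  constructor
  · refine ⟨fun _ => inv_nonneg.mpr (by positivity), ?_⟩
    simp only [colDN]
    rw [Finset.sum_const, Finset.card_univ]
    have hcard : Fintype.card
        (↥({fNe q} : Finset ((Fin 2 → Fin q) → Bool)) × (Fin 2 → Fin q)) = q ^ 2 := by
      rw [Fintype.card_prod, Fintype.card_coe, Finset.card_singleton, Fintype.card_fun,
        Fintype.card_fin, Fintype.card_fin, one_mul]
    rw [hcard, nsmul_eq_mul]
    push_cast
    field_simp
  intro P hP
  have hPs : ∀ σ, ∑ x, P σ x = 1 := fun σ => (hP σ).2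
  have hcval : ∀ (a : Fin 2 → Fin q) (b : Fin 2 → Fin q → Fin q), cVal (fNe q) a b
      = (fun c d => if c ≠ d then (1 : ℝ) else 0) (b 0 (a 0)) (b 1 (a 1)) := by
    intro a b; simp [cVal, fNe]
  have hE : ∀ a : Fin 2 → Fin q,
      ∑ b : Fin 2 → Fin q → Fin q, (∏ i, ∏ σ, P σ (b i σ)) * cVal (fNe q) a b
        = 1 - ∑ x, P (a 0) x * P (a 1) x := by
    intro a
    simp_rw [hcval a]
    rw [key2 P hPs (a 0) (a 1) (fun c d => if c ≠ d then (1 : ℝ) else 0)]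
    have hinner : ∀ c : Fin q,
        ∑ d, P (a 1) d * (if c ≠ d then (1 : ℝ) else 0) = 1 - P (a 1) c := by
      intro c
      have h : ∀ d : Fin q, P (a 1) d * (if c ≠ d then (1 : ℝ) else 0)
          = P (a 1) d - (if c = d then P (a 1) d else 0) := by
        intro d; by_cases h : c = d <;> simp [h]
      simp_rw [h]
      rw [Finset.sum_sub_distrib, hPs, Finset.sum_ite_eq, if_pos (Finset.mem_univ c)]
    have h2 : ∀ c : Fin q, ∑ d, P (a 0) c * (P (a 1) d * (if c ≠ d then (1 : ℝ) else 0))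
        = P (a 0) c - P (a 0) c * P (a 1) c := by
      intro c
      rw [← Finset.mul_sum, hinner c]
      ring
    simp_rw [h2]
    rw [Finset.sum_sub_distrib, hPs]
  have huniv : ∀ (i1 i2 : Fintype (Fin 2 → Fin q → Fin q)),
      @Finset.univ _ i1 = @Finset.univ _ i2 := fun i1 i2 => by
    cases Subsingleton.elim i1 i2; rfl
  have hEG : ∀ (inst : Fintype (Fin 2 → Fin q → Fin q)) (a : Fin 2 → Fin q),
      ∑ b ∈ (@Finset.univ _ inst), (∏ i, ∏ σ, P σ (b i σ)) * cVal (fNe q) a b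
        = 1 - ∑ x, P (a 0) x * P (a 1) x := by
    intro inst a
    rw [huniv inst]
    exact hE a
  have hcoe : ∀ p : ↥({fNe q} : Finset ((Fin 2 → Fin q) → Bool)),
      (p : (Fin 2 → Fin q) → Bool) = fNe q := fun p => Finset.mem_singleton.mp p.2
  simp only [hcoe]
  simp only [hEG]
  rw [Fintype.sum_prod_type, hsub]
  dsimp only
  simp only [colDN]
  rw [← Finset.mul_sum]
  set S : ℝ := ∑ x : Fin q, (∑ σ : Fin q, P σ x) ^ 2 with hSdef
  have hswap : ∑ a : Fin 2 → Fin q, ∑ x, P (a 0) x * P (a 1) x = S := by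
    rw [sum_fun_two (X := Fin q) (fun a => ∑ x, P (a 0) x * P (a 1) x)]
    have h1 : ∀ u v : Fin q, ∑ x, P (![u, v] 0) x * P (![u, v] 1) x
        = ∑ x, P u x * P v x := by intro u v; simp
    simp_rw [h1]
    have h2 : ∀ u : Fin q, ∑ v : Fin q, ∑ x, P u x * P v x
        = ∑ x, ∑ v : Fin q, P u x * P v x := fun u => Finset.sum_comm
    simp_rw [h2]
    rw [Finset.sum_comm]
    refine Finset.sum_congr rfl fun x _ => ?_
    rw [sq, Finset.sum_mul_sum]
  have hs : ∑ x : Fin q, ∑ σ : Fin q, P σ x = (q : ℝ) := by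
    rw [Finset.sum_comm]
    simp [hPs]
  have hcs : (q : ℝ) ≤ S := by
    have h := sq_sum_le_card_mul_sum_sq (s := Finset.univ)
      (f := fun x : Fin q => ∑ σ : Fin q, P σ x)
    rw [hs, Finset.card_univ, Fintype.card_fin] at h
    nlinarith [h]
  have hsum2 : ∑ a : Fin 2 → Fin q, ((1 : ℝ) - ∑ x, P (a 0) x * P (a 1) x)
      = (q : ℝ) ^ 2 - S := by
    rw [Finset.sum_sub_distrib, hswap, Finset.sum_const, Finset.card_univ,
      Fintype.card_fun, Fintype.card_fin, Fintype.card_fin, nsmul_eq_mul]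
    push_cast
    ring
  rw [hsum2]
  calc ((q : ℝ) ^ 2)⁻¹ * ((q : ℝ) ^ 2 - S)
      ≤ ((q : ℝ) ^ 2)⁻¹ * ((q : ℝ) ^ 2 - (q : ℝ)) := by
        apply mul_le_mul_of_nonneg_left (by linarith) (by positivity)
    _ = 1 - (q : ℝ)⁻¹ := by field_simp

set_option maxHeartbeats 1000000 in
lemma colPart3 (q : ℕ) (hq : 2 ≤ q) :
    marginal ({fNe q} : Finset ((Fin 2 → Fin q) → Bool)) (colDY q) =
      marginal ({fNe q} : Finset ((Fin 2 → Fin q) → Bool)) (colDN q) := by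
  have hq2 : (2 : ℝ) ≤ (q : ℝ) := by exact_mod_cast hq
  have hq0 : (0 : ℝ) < (q : ℝ) := by linarith
  have hq1 : (0 : ℝ) < (q : ℝ) - 1 := by linarith
  have hqne : (q : ℝ) ≠ 0 := ne_of_gt hq0
  have hq1ne : (q : ℝ) - 1 ≠ 0 := ne_of_gt hq1
  funext x
  obtain ⟨f, i, σ⟩ := x
  simp only [marginal]
  have hkey : ((q : ℝ) - 1) * ((q : ℝ) * ((q : ℝ) - 1))⁻¹ = (q : ℝ) * (((q : ℝ)) ^ 2)⁻¹ := by
    field_simp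
  fin_cases i
  · show (∑ a : Fin 2 → Fin q, if a 0 = σ then colDY q (f, a) else 0)
      = ∑ a : Fin 2 → Fin q, if a 0 = σ then colDN q (f, a) else 0
    rw [sum_fun_two (X := Fin q) (fun a => if a 0 = σ then colDY q (f, a) else 0),
      sum_fun_two (X := Fin q) (fun a => if a 0 = σ then colDN q (f, a) else 0)]
    have h1 : ∀ u v : Fin q, (if ![u, v] 0 = σ then colDY q (f, ![u, v]) else 0)
        = if u = σ then (if u ≠ v then ((q : ℝ) * ((q : ℝ) - 1))⁻¹ else 0) else 0 := by
      intro u v; simp [colDY]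
    have h2 : ∀ u v : Fin q, (if ![u, v] 0 = σ then colDN q (f, ![u, v]) else 0)
        = if u = σ then ((q : ℝ) ^ 2)⁻¹ else 0 := by
      intro u v; by_cases h : u = σ <;> simp [colDN, h]
    simp_rw [h1, h2]
    rw [sum2_pick_left σ (fun u v => if u ≠ v then ((q : ℝ) * ((q : ℝ) - 1))⁻¹ else 0),
      sum2_pick_left σ (fun _ _ => ((q : ℝ) ^ 2)⁻¹), sum_ite_ne_left,
      Finset.sum_const, Finset.card_univ, Fintype.card_fin, nsmul_eq_mul, hkey]
  · show (∑ a : Fin 2 → Fin q, if a 1 = σ then colDY q (f, a) else 0)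
      = ∑ a : Fin 2 → Fin q, if a 1 = σ then colDN q (f, a) else 0
    rw [sum_fun_two (X := Fin q) (fun a => if a 1 = σ then colDY q (f, a) else 0),
      sum_fun_two (X := Fin q) (fun a => if a 1 = σ then colDN q (f, a) else 0)]
    have h1 : ∀ u v : Fin q, (if ![u, v] 1 = σ then colDY q (f, ![u, v]) else 0)
        = if v = σ then (if u ≠ v then ((q : ℝ) * ((q : ℝ) - 1))⁻¹ else 0) else 0 := by
      intro u v; simp [colDY]
    have h2 : ∀ u v : Fin q, (if ![u, v] 1 = σ then colDN q (f, ![u, v]) else 0)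
        = if v = σ then ((q : ℝ) ^ 2)⁻¹ else 0 := by
      intro u v; simp [colDN]
    simp_rw [h1, h2]
    rw [sum2_pick_right σ (fun u v => if u ≠ v then ((q : ℝ) * ((q : ℝ) - 1))⁻¹ else 0),
      sum2_pick_right σ (fun _ _ => ((q : ℝ) ^ 2)⁻¹), sum_ite_ne_right,
      Finset.sum_const, Finset.card_univ, Fintype.card_fin, nsmul_eq_mul, hkey]

/-- Example 3 of the paper (`Max-qCol`): the pair `(D^Y, D^N)` witnesses
`K_1^Y ∩ K_{1−1/q}^N ≠ ∅` for the Max-q-Coloring predicate. -/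
theorem coloring_hard_pair (q : ℕ) (hq : 2 ≤ q) :
    colDY q ∈ SY ({fNe q} : Finset ((Fin 2 → Fin q) → Bool)) 1 ∧
    colDN q ∈ SN ({fNe q} : Finset ((Fin 2 → Fin q) → Bool)) (1 - (q : ℝ)⁻¹) ∧
    marginal ({fNe q} : Finset ((Fin 2 → Fin q) → Bool)) (colDY q) =
      marginal ({fNe q} : Finset ((Fin 2 → Fin q) → Bool)) (colDN q) :=
  ⟨colPart1 q hq, colPart2 q hq, colPart3 q hq⟩
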